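/- With notation of the previous decomposition (a,b,c,d for a gauge transformation between companion systems with Q, Q'), one has d = −(1/2)x^{k+1}b', c = (1/2)(Q'−Q)b − (1/2)(x^{k+1}d/dx)²b, and the remaining equations reduce to: x^{k+1}a' = (1/2)(Q'−Q)b and (Q'+Q)x^{k+1}b' + (1/2)b·x^{k+1}(Q'+Q)' − (1/2)(x^{k+1}d/dx)³b = (Q'−Q)a. -/

import Mathlib

/-- The operator `x^{k+1}·d/dx` on formal power series. -/
noncomputable def Dop (k : ℕ) (f : PowerSeries ℂ) : PowerSeries ℂ :=
  PowerSeries.X ^ (k+1) * f.derivativeFun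

lemma Dop_add (k : ℕ) (f g : PowerSeries ℂ) :
    Dop k (f + g) = Dop k f + Dop k g := by
  simp [Dop, PowerSeries.derivativeFun_add, mul_add]

lemma Dop_mul (k : ℕ) (f g : PowerSeries ℂ) :
    Dop k (f * g) = f * Dop k g + g * Dop k f := by
  simp only [Dop, PowerSeries.derivativeFun_mul, smul_eq_mul, mul_add]
  ring

lemma Dop_sub (k : ℕ) (f g : PowerSeries ℂ) :
    Dop k (f - g) = Dop k f - Dop k g := by
  have h := Dop_add k (f - g) g
  rw [sub_add_cancel] at h
  linear_combination -h

lemma Dop_C (k : ℕ) (r : ℂ) (f : PowerSeries ℂ) :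
    Dop k (PowerSeries.C (R := ℂ) r * f) = PowerSeries.C (R := ℂ) r * Dop k f := by
  rw [Dop_mul]
  simp [Dop, show (PowerSeries.C (R := ℂ) r).derivativeFun = 0 from PowerSeries.derivative_C]

lemma Dop_neg (k : ℕ) (f : PowerSeries ℂ) : Dop k (-f) = -Dop k f := by
  have h0 : Dop k 0 = 0 := by
    have := Dop_add k 0 0
    simpa using this
  have h := Dop_sub k 0 f
  rw [zero_sub, h0, zero_sub] at h
  exact h

/-- from the four equations for `(a,b,c,d)` one gets
`d = −(1/2)x^{k+1}b'`, `c = (1/2)(Q'−Q)b − (1/2)(x^{k+1}d/dx)²b`, and the two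
reduced equations. -/
theorem stmt_8 (k : ℕ) (Q Q' a b c d : PowerSeries ℂ)
    (e1 : Dop k b = -2 * d)
    (e2 : Dop k (a + d) = c)
    (e3 : Dop k (a - d) = -c + (Q' - Q) * b)
    (e4 : Dop k (Q * b + c) = (Q' + Q) * d + (Q' - Q) * a) :
    d = -(PowerSeries.C (R := ℂ) (1/2)) * Dop k b ∧
    c = PowerSeries.C (R := ℂ) (1/2) * ((Q' - Q) * b)
        - PowerSeries.C (R := ℂ) (1/2) * Dop k (Dop k b) ∧
    Dop k a = PowerSeries.C (R := ℂ) (1/2) * ((Q' - Q) * b) ∧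
    (Q' + Q) * Dop k b + PowerSeries.C (R := ℂ) (1/2) * (b * Dop k (Q' + Q))
        - PowerSeries.C (R := ℂ) (1/2) * Dop k (Dop k (Dop k b)) = (Q' - Q) * a := by
  have h2 : (PowerSeries.C (R := ℂ) (1/2)) * 2 = 1 := by
    rw [← map_ofNat (PowerSeries.C (R := ℂ)) 2, ← map_mul]
    norm_num
  have hd : d = -(PowerSeries.C (R := ℂ) (1/2)) * Dop k b := by
    rw [e1, show -(PowerSeries.C (R := ℂ) (1/2)) * (-2 * d)
      = (PowerSeries.C (R := ℂ) (1/2) * 2) * d by ring, h2, one_mul]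
  rw [Dop_add] at e2
  rw [Dop_sub] at e3
  have ha : Dop k a = PowerSeries.C (R := ℂ) (1/2) * ((Q' - Q) * b) := by
    linear_combination PowerSeries.C (R := ℂ) (1/2) * (e2 + e3) - Dop k a * h2
  have hDd : Dop k d = -(PowerSeries.C (R := ℂ) (1/2)) * Dop k (Dop k b) := by
    rw [hd, neg_mul, Dop_neg, Dop_C]
    ring
  have hc : c = PowerSeries.C (R := ℂ) (1/2) * ((Q' - Q) * b)
      - PowerSeries.C (R := ℂ) (1/2) * Dop k (Dop k b) := by
    rw [← e2, ha, hDd]; ring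
  refine ⟨hd, hc, ha, ?_⟩
  rw [Dop_add, Dop_mul, hc, Dop_sub, Dop_C, Dop_C, Dop_mul, Dop_sub, hd] at e4
  rw [Dop_add]
  linear_combination e4 + (b * Dop k Q - Q' * Dop k b) * h2
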